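/- Let L₀ be a maximal invariant linked system on an abelian group G, and let A ∈ L₀⊥ \ L₀. Then there exists x ∈ G such that xA = G \ A, and consequently x²A = A. -/

import Mathlib

def Linked {X : Type*} (L : Set (Set X)) : Prop :=
  ∀ A ∈ L, ∀ B ∈ L, (A ∩ B).Nonempty

def MaxLinked {X : Type*} (L : Set (Set X)) : Prop :=
  Linked L ∧ ∀ L' : Set (Set X), Linked L' → L ⊆ L' → L' = L

def perp {X : Type*} (L : Set (Set X)) : Set (Set X) :=
  {A | ∀ F ∈ L, (A ∩ F).Nonempty}

def conv {G : Type*} [Group G] (A B : Set (Set G)) : Set (Set G) :=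
  {S | {x : G | {z : G | x * z ∈ S} ∈ B} ∈ A}

def Invariant {G : Type*} [Group G] (L : Set (Set G)) : Prop :=
  ∀ x : G, (fun A => (fun a => x * a) '' A) '' L = L

def MaxInvLinked {G : Type*} [Group G] (L : Set (Set G)) : Prop :=
  Linked L ∧ Invariant L ∧
    ∀ L' : Set (Set G), Linked L' → Invariant L' → L ⊆ L' → L' = L

namespace PerpShiftAux

variable {G : Type*} [CommGroup G]

/-- translate of a set -/
def tr (x : G) (A : Set G) : Set G := (fun a => x * a) '' A

lemma mem_tr {x b : G} {A : Set G} : b ∈ tr x A ↔ x⁻¹ * b ∈ A := by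
  constructor
  · rintro ⟨a, ha, rfl⟩; simpa using ha
  · intro h; exact ⟨x⁻¹ * b, h, by group⟩

lemma tr_tr (x y : G) (A : Set G) : tr x (tr y A) = tr (x * y) A := by
  unfold tr
  rw [Set.image_image]
  apply Set.image_congr
  intro a _; rw [mul_assoc]

lemma tr_one (A : Set G) : tr 1 A = A := by
  ext b; simp [mem_tr]

lemma tr_mono {A B : Set G} (x : G) (h : A ⊆ B) : tr x A ⊆ tr x B :=
  Set.image_mono h

lemma tr_compl (x : G) (A : Set G) : tr x Aᶜ = (tr x A)ᶜ := by
  ext b; simp [mem_tr]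

lemma tr_mem_of_invariant {L : Set (Set G)} (hL : Invariant L) {F : Set G}
    (hF : F ∈ L) (x : G) : tr x F ∈ L := by
  have := hL x
  rw [← this]
  exact ⟨F, hF, rfl⟩

/-- the family obtained by adding all translates of S -/
def ext (L : Set (Set G)) (S : Set G) : Set (Set G) :=
  L ∪ {T | ∃ g : G, T = tr g S}

lemma invariant_ext {L : Set (Set G)} (hL : Invariant L) (S : Set G) :
    Invariant (ext L S) := by
  intro x
  have himg : (fun A => (fun a => x * a) '' A) '' {T | ∃ g : G, T = tr g S}
      = {T | ∃ g : G, T = tr g S} := by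
    ext T
    constructor
    · rintro ⟨T', ⟨g, rfl⟩, rfl⟩
      exact ⟨x * g, tr_tr x g S⟩
    · rintro ⟨g, rfl⟩
      refine ⟨tr (x⁻¹ * g) S, ⟨x⁻¹ * g, rfl⟩, ?_⟩
      show tr x (tr (x⁻¹ * g) S) = tr g S
      rw [tr_tr, mul_inv_cancel_left]
  unfold ext
  rw [Set.image_union, hL x, himg]

lemma subset_ext (L : Set (Set G)) (S : Set G) : L ⊆ ext L S :=
  Set.subset_union_left

lemma self_mem_ext (L : Set (Set G)) (S : Set G) : S ∈ ext L S :=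
  Or.inr ⟨1, (tr_one S).symm⟩

/-- upward closure of a maximal invariant linked system -/
lemma mem_of_superset {L : Set (Set G)} (hL : MaxInvLinked L) {F S : Set G}
    (hF : F ∈ L) (hFS : F ⊆ S) : S ∈ L := by
  obtain ⟨hLinked, hInv, hMax⟩ := hL
  have hlink : Linked (ext L S) := by
    rintro B hB C hC
    rcases hB with hB | ⟨g, rfl⟩ <;> rcases hC with hC | ⟨h, rfl⟩
    · exact hLinked B hB C hC
    · have h1 := hLinked B hB (tr h F) (tr_mem_of_invariant hInv hF h)
      exact h1.mono (Set.inter_subset_inter_right _ (tr_mono h hFS))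
    · have h1 := hLinked (tr g F) (tr_mem_of_invariant hInv hF g) C hC
      exact h1.mono (Set.inter_subset_inter_left _ (tr_mono g hFS))
    · have h1 := hLinked (tr g F) (tr_mem_of_invariant hInv hF g)
        (tr h F) (tr_mem_of_invariant hInv hF h)
      exact h1.mono (Set.inter_subset_inter (tr_mono g hFS) (tr_mono h hFS))
  have := hMax _ hlink (invariant_ext hInv S) (subset_ext L S)
  rw [← this]
  exact self_mem_ext L S

/-- a set in perp L \ L has a disjoint translate -/
lemma exists_disjoint_translate {L : Set (Set G)} (hL : MaxInvLinked L) {S : Set G}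
    (hSp : S ∈ perp L) (hSn : S ∉ L) : ∃ x : G, tr x S ∩ S = ∅ := by
  by_contra hcon
  push_neg at hcon
  have hne : ∀ x : G, (tr x S ∩ S).Nonempty := hcon
  obtain ⟨hLinked, hInv, hMax⟩ := hL
  have hlink : Linked (ext L S) := by
    rintro B hB C hC
    rcases hB with hB | ⟨g, rfl⟩ <;> rcases hC with hC | ⟨h, rfl⟩
    · exact hLinked B hB C hC
    · -- B ∈ L, tr h S
      have h1 : (S ∩ tr h⁻¹ B).Nonempty := hSp _ (tr_mem_of_invariant hInv hB h⁻¹)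
      obtain ⟨z, hz1, hz2⟩ := h1
      refine ⟨h * z, ?_, ⟨z, hz1, rfl⟩⟩
      rw [mem_tr] at hz2
      simpa using hz2
    · -- tr g S, C ∈ L
      have h1 : (S ∩ tr g⁻¹ C).Nonempty := hSp _ (tr_mem_of_invariant hInv hC g⁻¹)
      obtain ⟨z, hz1, hz2⟩ := h1
      refine ⟨g * z, ⟨z, hz1, rfl⟩, ?_⟩
      rw [mem_tr] at hz2
      simpa using hz2
    · -- tr g S, tr h S
      obtain ⟨z, hz1, hz2⟩ := hne (g⁻¹ * h)
      refine ⟨g * z, ⟨z, hz2, rfl⟩, ?_⟩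
      rw [mem_tr] at hz1 ⊢
      have heq : h⁻¹ * (g * z) = (g⁻¹ * h)⁻¹ * z := by group
      rw [heq]
      exact hz1
  have := hMax _ hlink (invariant_ext hInv S) (subset_ext L S)
  rw [← this] at hSn
  exact hSn (self_mem_ext L S)

end PerpShiftAux

theorem perp_diff_shift {G : Type*} [CommGroup G] {L₀ : Set (Set G)}
    (hL₀ : MaxInvLinked L₀) {A : Set G} (hA : A ∈ perp L₀ \ L₀) :
    ∃ x : G, (fun a => x * a) '' A = Aᶜ ∧ (fun a => x ^ 2 * a) '' A = A := by
  open PerpShiftAux in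
  obtain ⟨hAp, hAn⟩ := hA
  -- Aᶜ is also in perp L₀ \ L₀
  have hAcp : Aᶜ ∈ perp L₀ := by
    intro F hF
    by_contra hcon
    rw [Set.not_nonempty_iff_eq_empty] at hcon
    have hFA : F ⊆ A := by
      intro a ha
      by_contra haA
      exact Set.eq_empty_iff_forall_notMem.mp hcon a ⟨haA, ha⟩
    exact hAn (mem_of_superset hL₀ hF hFA)
  have hAcn : Aᶜ ∉ L₀ := by
    intro hmem
    obtain ⟨a, ha1, ha2⟩ := hAp _ hmem
    exact ha2 ha1
  obtain ⟨x, hx⟩ := exists_disjoint_translate hL₀ hAp hAn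
  obtain ⟨g, hg⟩ := exists_disjoint_translate hL₀ hAcp hAcn
  -- basic inclusions
  have sub1 : tr x A ⊆ Aᶜ := by
    intro a ha hA'
    exact Set.eq_empty_iff_forall_notMem.mp hx a ⟨ha, hA'⟩
  have sub2 : Aᶜ ⊆ tr g A := by
    intro a ha
    by_contra hcon
    have : a ∈ tr g Aᶜ ∩ Aᶜ := ⟨by rw [tr_compl]; exact hcon, ha⟩
    rw [hg] at this
    exact this
  have sub3 : Aᶜ ⊆ tr g⁻¹ A := by
    -- tr g Aᶜ ⊆ A, translate by g⁻¹
    have h1 : tr g Aᶜ ⊆ A := by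
      intro a ha
      by_contra hcon
      exact Set.eq_empty_iff_forall_notMem.mp hg a ⟨ha, hcon⟩
    have h2 := tr_mono g⁻¹ h1
    rw [tr_tr, inv_mul_cancel, tr_one] at h2
    exact h2
  have sub4 : tr x⁻¹ A ⊆ Aᶜ := by
    intro a ha hA'
    have : x * a ∈ tr x A ∩ A := by
      constructor
      · rw [mem_tr]; simpa using hA'
      · rw [mem_tr] at ha
        simpa using ha
    rw [hx] at this
    exact this
  -- chain: tr x A ⊆ Aᶜ ⊆ tr g A ⊆ tr x A
  have sub5 : tr g A ⊆ tr x A := by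
    have h1 : tr x⁻¹ A ⊆ tr g⁻¹ A := sub4.trans sub3
    have h2 := tr_mono (g * x) h1
    rw [tr_tr, tr_tr] at h2
    have e1 : g * x * x⁻¹ = g := by group
    have e2 : g * x * g⁻¹ = x := by
      rw [mul_comm g x, mul_assoc, mul_inv_cancel, mul_one]
    rw [e1, e2] at h2
    exact h2
  have key : tr x A = Aᶜ := sub1.antisymm (sub2.trans sub5)
  refine ⟨x, key, ?_⟩
  have : tr (x ^ 2) A = A := by
    rw [pow_two, ← tr_tr, key, tr_compl, key, compl_compl]
  exact this
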